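/- For every x ∈ 𝕋, the upper local return rate satisfies R_up(x) = limsup_{k→∞} q_{k+1} / r_k(x) (equivalently, R_up(x) = 1 / liminf_{k→∞} r_k(x)/q_{k+1}, as extended reals). -/

import Mathlib

open Filter MeasureTheory Set
open scoped ENNReal

noncomputable section

/-- The rotation of the circle `𝕋 = ℝ/ℤ` by the angle `α`. -/
def rotF (α : ℝ) (y : UnitAddCircle) : UnitAddCircle := y + (α : UnitAddCircle)

/-- The Poincaré return time `τ(M)` of a set `M ⊆ 𝕋` under the rotation by `α`. -/
def retTime (α : ℝ) (M : Set UnitAddCircle) : ℕ :=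
  sInf {k : ℕ | 1 ≤ k ∧ ((rotF α)^[k] '' M ∩ M).Nonempty}

/-- The arc `I₁ = [1-α, 1)` of the circle. -/
def I1 (α : ℝ) : Set UnitAddCircle := (fun t : ℝ => (t : UnitAddCircle)) '' Ico (1 - α) 1

/-- The `n`-th cylinder interval `I_{x,n}` of `x` for the Sturmian coding
(`I_{x,0} = 𝕋` by convention). -/
def cyl (α : ℝ) (x : UnitAddCircle) (n : ℕ) : Set UnitAddCircle :=
  {y | ∀ k < n, ((rotF α)^[k] y ∈ I1 α ↔ (rotF α)^[k] x ∈ I1 α)}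

/-- The lower local return rate `R_low(x) = liminf_n τ(I_{x,n})/n`, valued in `[0,∞]`. -/
def Rlow (α : ℝ) (x : UnitAddCircle) : ℝ≥0∞ :=
  liminf (fun n : ℕ => (retTime α (cyl α x n) : ℝ≥0∞) / (n : ℝ≥0∞)) atTop

/-- The upper local return rate `R_up(x) = limsup_n τ(I_{x,n})/n`, valued in `[0,∞]`. -/
def Rup (α : ℝ) (x : UnitAddCircle) : ℝ≥0∞ :=
  limsup (fun n : ℕ => (retTime α (cyl α x n) : ℝ≥0∞) / (n : ℝ≥0∞)) atTop

/-- `rjump α q x k` is the paper's `r_{k-1}(x) = min {n | τ(I_{x,n}) ≥ q_{k-1+1}}`: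
with our indexing, `q (k+1)` is the paper's `q_k`.  In particular `rjump α q x (k+1)`
is the paper's `r_k(x)` for `k ≥ 0`, and `rjump α q x 0` is the paper's `r_{-1}(x) = 0`. -/
def rjump (α : ℝ) (q : ℕ → ℕ) (x : UnitAddCircle) (k : ℕ) : ℕ :=
  sInf {n : ℕ | q (k + 1) ≤ retTime α (cyl α x n)}


/-- Bundled continued-fraction data. -/
structure CF (α : ℝ) (a p q : ℕ → ℕ) : Prop where
  hα : α ∈ Set.Ioo (0 : ℝ) 1
  ha : ∀ k, 1 ≤ a k
  hq0 : q 0 = 0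
  hq1 : q 1 = 1
  hq : ∀ k, q (k + 2) = a k * q (k + 1) + q k
  hp0 : p 0 = 1
  hp1 : p 1 = 0
  hp : ∀ k, p (k + 2) = a k * p (k + 1) + p k
  hcf : ∀ k, 0 < (-1 : ℝ) ^ (k + 1) * ((q k : ℝ) * α - (p k : ℝ))

/-- `Efn k = η_{k-1}` in paper indexing. -/
def Efn (α : ℝ) (p q : ℕ → ℕ) (k : ℕ) : ℝ := (-1 : ℝ) ^ (k + 1) * ((q k : ℝ) * α - (p k : ℝ))

namespace CF

variable {α : ℝ} {a p q : ℕ → ℕ} (h : CF α a p q)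
include h

theorem Epos (k : ℕ) : 0 < Efn α p q k := h.hcf k

theorem Eabs (k : ℕ) : |(q k : ℝ) * α - (p k : ℝ)| = Efn α p q k := by
  have hh := h.hcf k
  rcases Nat.even_or_odd (k + 1) with he | he
  · rw [he.neg_one_pow, one_mul] at hh
    rw [abs_of_pos hh, Efn, he.neg_one_pow, one_mul]
  · rw [he.neg_one_pow, neg_one_mul] at hh
    rw [abs_of_neg (by linarith), Efn, he.neg_one_pow, neg_one_mul]

theorem E0 : Efn α p q 0 = 1 := by simp [Efn, h.hq0, h.hp0]

theorem E1 : Efn α p q 1 = α := by norm_num [Efn, h.hq1, h.hp1]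

theorem Erec (k : ℕ) : Efn α p q (k + 2) = Efn α p q k - (a k : ℝ) * Efn α p q (k + 1) := by
  simp only [Efn, h.hq k, h.hp k]
  push_cast
  rw [show k + 2 + 1 = k + 3 from rfl, show k + 1 + 1 = k + 2 from rfl,
    show k + 3 = k + 1 + 2 from rfl, pow_add, pow_add, pow_add]
  ring

theorem Edec (k : ℕ) : Efn α p q (k + 1) < Efn α p q k := by
  have h2 := h.Epos (k + 2)
  have h1 := h.Epos (k + 1)
  have hrec := h.Erec k
  have hak : (1 : ℝ) ≤ (a k : ℝ) := by exact_mod_cast h.ha k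
  nlinarith

theorem Ehalf (k : ℕ) : Efn α p q (k + 2) < Efn α p q k / 2 := by
  have h2 := h.Epos (k + 2)
  have h1 := h.Edec (k + 1)
  have hrec := h.Erec k
  have hak : (1 : ℝ) ≤ (a k : ℝ) := by exact_mod_cast h.ha k
  nlinarith [h.Epos (k + 1)]

theorem Esmall {δ : ℝ} (hδ : 0 < δ) : ∃ k, Efn α p q k < δ := by
  have key : ∀ m : ℕ, Efn α p q (2 * m) ≤ (1 / 2) ^ m := by
    intro m
    induction m with
    | zero => simp [h.E0]
    | succ m ih =>
      have h2 := h.Ehalf (2 * m)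
      have hh : 2 * (m + 1) = 2 * m + 2 := by ring
      rw [hh, pow_succ]
      linarith
  obtain ⟨m, hm⟩ := exists_pow_lt_of_lt_one hδ (by norm_num : (1:ℝ)/2 < 1)
  exact ⟨2 * m, lt_of_le_of_lt (key m) hm⟩

theorem EstrictAnti : StrictAnti (Efn α p q) :=
  strictAnti_nat_of_succ_lt h.Edec

theorem qpos (k : ℕ) : 1 ≤ q (k + 1) := by
  induction k with
  | zero => simp [h.hq1]
  | succ k ih => have := h.hq k; have := h.ha k; nlinarith

theorem qmono : Monotone q := by
  apply monotone_nat_of_le_succ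
  intro k
  match k with
  | 0 => have := h.hq0; have := h.hq1; omega
  | (k + 1) => have := h.hq k; have := h.ha k; have := h.qpos k; nlinarith

theorem qstrict (k : ℕ) : q (k + 2) < q (k + 3) := by
  have hh := h.hq (k + 1); have := h.ha (k + 1); have h1 := h.qpos k
  have h2 := h.qpos (k + 1)
  nlinarith

theorem qlarge (k : ℕ) : k + 1 ≤ q (k + 2) := by
  induction k with
  | zero => have := h.hq 0; have := h.ha 0; have := h.hq1; have := h.hq0; nlinarith
  | succ k ih =>
    have := h.qstrict k
    show k + 2 ≤ q (k + 3)
    omega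

theorem qdet (k : ℕ) : (q (k + 1) : ℤ) * (p k : ℤ) - (q k : ℤ) * (p (k + 1) : ℤ) = (-1) ^ k := by
  induction k with
  | zero => simp [h.hq0, h.hq1, h.hp0, h.hp1]
  | succ k ih =>
    have hq2 : (q (k+2) : ℤ) = (a k : ℤ) * (q (k+1) : ℤ) + (q k : ℤ) := by exact_mod_cast h.hq k
    have hp2 : (p (k+2) : ℤ) = (a k : ℤ) * (p (k+1) : ℤ) + (p k : ℤ) := by exact_mod_cast h.hp k
    rw [show k + 1 + 1 = k + 2 from rfl, hq2, hp2, pow_succ]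
    ring_nf
    ring_nf at ih
    linarith [ih]



theorem bestApprox (j k : ℕ) (m : ℤ) (hk1 : 1 ≤ k) (hk2 : k < q (j + 2)) :
    Efn α p q (j + 1) ≤ |(k : ℝ) * α - (m : ℝ)| := by
  have he1 : 0 < Efn α p q (j + 1) := h.Epos _
  have he2 : 0 < Efn α p q (j + 2) := h.Epos _
  have hdet : (q (j + 2) : ℤ) * (p (j + 1) : ℤ) - (q (j + 1) : ℤ) * (p (j + 2) : ℤ)
      = (-1) ^ (j + 1) := h.qdet (j + 1)
  have h1 : ((-1 : ℤ) ^ (j + 1)) * ((-1 : ℤ) ^ (j + 1)) = 1 := by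
    rw [← pow_add]; exact Even.neg_one_pow ⟨j + 1, rfl⟩
  obtain ⟨s, t, hsq, hm⟩ : ∃ s t : ℤ,
      s * (q (j + 2) : ℤ) + t * (q (j + 1) : ℤ) = (k : ℤ) ∧
      s * (p (j + 2) : ℤ) + t * (p (j + 1) : ℤ) = m :=
    ⟨(-1) ^ (j + 1) * ((k : ℤ) * (p (j + 1) : ℤ) - m * (q (j + 1) : ℤ)),
     (-1) ^ (j + 1) * (m * (q (j + 2) : ℤ) - (k : ℤ) * (p (j + 2) : ℤ)),
     by linear_combination ((-1 : ℤ) ^ (j + 1) * (k : ℤ)) * hdet + (k : ℤ) * h1,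
     by linear_combination ((-1 : ℤ) ^ (j + 1) * m) * hdet + m * h1⟩
  have hsqR : (s : ℝ) * (q (j + 2) : ℝ) + (t : ℝ) * (q (j + 1) : ℝ) = (k : ℝ) := by
    exact_mod_cast congrArg (Int.cast : ℤ → ℝ) hsq
  have hmR : (s : ℝ) * (p (j + 2) : ℝ) + (t : ℝ) * (p (j + 1) : ℝ) = (m : ℝ) := by
    exact_mod_cast congrArg (Int.cast : ℤ → ℝ) hm
  have key : (k : ℝ) * α - (m : ℝ)
      = (s : ℝ) * ((q (j + 2) : ℝ) * α - (p (j + 2) : ℝ))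
        + (t : ℝ) * ((q (j + 1) : ℝ) * α - (p (j + 1) : ℝ)) := by
    linear_combination (-α) * hsqR + hmR
  have h1R : ((-1 : ℝ) ^ (j + 1)) * ((-1 : ℝ) ^ (j + 1)) = 1 := by
    rw [← pow_add]; exact Even.neg_one_pow ⟨j + 1, rfl⟩
  have hE2 : (q (j + 2) : ℝ) * α - (p (j + 2) : ℝ) = (-1 : ℝ) ^ (j + 1) * Efn α p q (j + 2) := by
    rw [Efn, show j + 2 + 1 = (j + 1) + 2 from rfl, pow_add]
    linear_combination (-((q (j + 2) : ℝ) * α) + (p (j + 2) : ℝ)) * h1R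
  have hE1 : (q (j + 1) : ℝ) * α - (p (j + 1) : ℝ)
      = -((-1 : ℝ) ^ (j + 1)) * Efn α p q (j + 1) := by
    rw [Efn, pow_add]
    linear_combination (-((q (j + 1) : ℝ) * α) + (p (j + 1) : ℝ)) * h1R
  have key2 : |(k : ℝ) * α - (m : ℝ)|
      = |(s : ℝ) * Efn α p q (j + 2) - (t : ℝ) * Efn α p q (j + 1)| := by
    rw [key, hE2, hE1,
      show (s : ℝ) * ((-1 : ℝ) ^ (j + 1) * Efn α p q (j + 2))
          + (t : ℝ) * (-((-1 : ℝ) ^ (j + 1)) * Efn α p q (j + 1))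
        = ((-1 : ℝ) ^ (j + 1)) * ((s : ℝ) * Efn α p q (j + 2) - (t : ℝ) * Efn α p q (j + 1))
        from by ring, abs_mul, abs_pow, abs_neg, abs_one, one_pow, one_mul]
  rw [key2]
  have hk1' : (1 : ℤ) ≤ (k : ℤ) := by exact_mod_cast hk1
  have hk2' : (k : ℤ) < (q (j + 2) : ℤ) := by exact_mod_cast hk2
  have hq2' : (1 : ℤ) ≤ (q (j + 2) : ℤ) := by exact_mod_cast h.qpos (j + 1)
  have hq1' : (0 : ℤ) ≤ (q (j + 1) : ℤ) := by positivity
  clear key2 key hE1 hE2 hsqR hmR hm hdet h1 h1R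
  revert he1 he2
  generalize Efn α p q (j + 1) = e1
  generalize Efn α p q (j + 2) = e2
  intro he1 he2
  rcases lt_trichotomy t 0 with ht0 | ht0 | ht0
  · rcases lt_trichotomy s 0 with hs0 | hs0 | hs0
    · exfalso; nlinarith
    · rw [le_abs]; left
      have htR : (t : ℝ) ≤ -1 := by exact_mod_cast (by omega : t ≤ -1)
      have h2 : -(1 : ℝ) * e1 ≥ (t : ℝ) * e1 := by nlinarith
      rw [hs0]; push_cast; linarith
    · rw [le_abs]; left
      have htR : (t : ℝ) ≤ -1 := by exact_mod_cast (by omega : t ≤ -1)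
      have hsR : (1 : ℝ) ≤ (s : ℝ) := by exact_mod_cast (by omega : 1 ≤ s)
      have h2 : -(1 : ℝ) * e1 ≥ (t : ℝ) * e1 := by nlinarith
      have h3 : (1 : ℝ) * e2 ≤ (s : ℝ) * e2 := by nlinarith
      linarith
  · exfalso
    rw [ht0, zero_mul, add_zero] at hsq
    rcases lt_trichotomy s 0 with hs0 | hs0 | hs0
    · nlinarith
    · rw [hs0, zero_mul] at hsq; omega
    · nlinarith
  · rcases lt_trichotomy s 0 with hs0 | hs0 | hs0
    · rw [le_abs]; right
      have htR : (1 : ℝ) ≤ (t : ℝ) := by exact_mod_cast (by omega : 1 ≤ t)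
      have hsR : (s : ℝ) ≤ -1 := by exact_mod_cast (by omega : s ≤ -1)
      have h2 : (1 : ℝ) * e1 ≤ (t : ℝ) * e1 := by nlinarith
      have h3 : (s : ℝ) * e2 ≤ -(1 : ℝ) * e2 := by nlinarith
      linarith
    · rw [le_abs]; right
      have htR : (1 : ℝ) ≤ (t : ℝ) := by exact_mod_cast (by omega : 1 ≤ t)
      have h2 : (1 : ℝ) * e1 ≤ (t : ℝ) * e1 := by nlinarith
      rw [hs0]; push_cast; linarith
    · exfalso; nlinarith

end CF

theorem rotF_iterate (α : ℝ) (t : ℝ) (k : ℕ) :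
    (rotF α)^[k] ((t : ℝ) : UnitAddCircle) = ((t + k * α : ℝ) : UnitAddCircle) := by
  induction k with
  | zero => simp
  | succ k ih =>
    rw [Function.iterate_succ_apply', ih, rotF]
    have : (t + k * α) + α = t + (k + 1 : ℕ) * α := by push_cast; ring
    rw [← this]
    norm_cast

theorem ucoe_eq_coe (s u : ℝ) :
    ((s : UnitAddCircle) = (u : UnitAddCircle)) ↔ ∃ m : ℤ, s - u = m := by
  rw [← sub_eq_zero, ← AddCircle.coe_sub, AddCircle.coe_eq_zero_iff]
  constructor
  · rintro ⟨n, hn⟩; exact ⟨n, by simpa using hn.symm⟩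
  · rintro ⟨m, hm⟩; exact ⟨m, by simp [hm]⟩

theorem ucoe_inj {s u : ℝ} (hs : s ∈ Ico (0:ℝ) 1) (hu : u ∈ Ico (0:ℝ) 1)
    (heq : (s : UnitAddCircle) = (u : UnitAddCircle)) : s = u := by
  obtain ⟨m, hm⟩ := (ucoe_eq_coe s u).1 heq
  have : (-1 : ℝ) < m := by rw [← hm]; obtain ⟨hs0, hs1⟩ := hs; obtain ⟨hu0, hu1⟩ := hu; linarith
  have h2 : (m : ℝ) < 1 := by rw [← hm]; obtain ⟨hs0, hs1⟩ := hs; obtain ⟨hu0, hu1⟩ := hu; linarith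
  have hm0 : m = 0 := by
    have a1 : (-1 : ℤ) < m := by exact_mod_cast this
    have a2 : m < (1 : ℤ) := by exact_mod_cast h2
    omega
  rw [hm0] at hm; push_cast at hm; linarith

theorem ucoe_surj (z : UnitAddCircle) : ∃ t, t ∈ Ico (0:ℝ) 1 ∧ (t : UnitAddCircle) = z := by
  induction z using QuotientAddGroup.induction_on with
  | H t =>
    refine ⟨Int.fract t, ⟨Int.fract_nonneg t, Int.fract_lt_one t⟩, ?_⟩
    rw [ucoe_eq_coe]
    refine ⟨-⌊t⌋, ?_⟩
    rw [Int.fract]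
    push_cast
    ring

theorem mem_I1_iff {α : ℝ} (hα : α ∈ Set.Ioo (0:ℝ) 1) (t : ℝ) :
    ((t : ℝ) : UnitAddCircle) ∈ I1 α ↔ Int.fract t ∈ Ico (1 - α) 1 := by
  obtain ⟨hα0, hα1⟩ := hα
  constructor
  · rintro ⟨u, hu, hequ⟩
    obtain ⟨m, hm⟩ := (ucoe_eq_coe u t).1 hequ
    have hufr : Int.fract u = u := Int.fract_eq_self.2 ⟨by linarith [hu.1], hu.2⟩
    have : Int.fract t = Int.fract u := by
      have : u = t + m := by linarith
      rw [this, Int.fract_add_intCast]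
    rw [this, hufr]; exact hu
  · intro hfr
    refine ⟨Int.fract t, hfr, ?_⟩
    rw [ucoe_eq_coe]
    refine ⟨-⌊t⌋, ?_⟩
    rw [Int.fract]; push_cast; ring

theorem floor_wrap_iff {α : ℝ} (hα : α ∈ Set.Ioo (0:ℝ) 1) (s : ℝ) :
    Int.fract s ∈ Ico (1 - α) 1 ↔ ⌊s + α⌋ = ⌊s⌋ + 1 := by
  obtain ⟨hα0, hα1⟩ := hα
  have hs : s = (⌊s⌋ : ℝ) + Int.fract s := by rw [Int.fract]; ring
  have hfr0 : 0 ≤ Int.fract s := Int.fract_nonneg s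
  have hfr1 : Int.fract s < 1 := Int.fract_lt_one s
  constructor
  · intro hmem
    rw [Int.floor_eq_iff]
    constructor
    · push_cast; linarith [hmem.1]
    · push_cast; linarith
  · intro hfl
    have h1 : (↑(⌊s⌋ + 1) : ℝ) ≤ s + α := by rw [← hfl]; exact Int.floor_le _
    push_cast at h1
    exact ⟨by linarith, hfr1⟩

theorem floor_dichotomy {α : ℝ} (hα : α ∈ Set.Ioo (0:ℝ) 1) (s : ℝ) :
    ⌊s⌋ ≤ ⌊s + α⌋ ∧ ⌊s + α⌋ ≤ ⌊s⌋ + 1 := by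
  obtain ⟨hα0, hα1⟩ := hα
  constructor
  · exact Int.floor_mono (by linarith)
  · have : s + α < (⌊s⌋ : ℝ) + 2 := by
      have := Int.lt_floor_add_one s; linarith
    have h2 : ⌊s + α⌋ < ⌊s⌋ + 2 := by
      rw [Int.floor_lt]; push_cast; linarith
    omega

theorem mem_cyl_iff {α : ℝ} (hα : α ∈ Set.Ioo (0:ℝ) 1) {x : UnitAddCircle} {t0 t : ℝ}
    (ht0 : t0 ∈ Ico (0:ℝ) 1) (ht : t ∈ Ico (0:ℝ) 1) (hx : (t0 : UnitAddCircle) = x) (n : ℕ) :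
    ((t : ℝ) : UnitAddCircle) ∈ cyl α x n ↔ ∀ k ≤ n, ⌊t + k * α⌋ = ⌊t0 + k * α⌋ := by
  have hiter : ∀ (u : ℝ) (k : ℕ), ((rotF α)^[k] ((u:ℝ) : UnitAddCircle) ∈ I1 α
      ↔ ⌊u + k * α + α⌋ = ⌊u + k * α⌋ + 1) := by
    intro u k
    rw [rotF_iterate, mem_I1_iff hα, floor_wrap_iff hα]
  have hcond : ∀ y : ℝ, ((y : ℝ) : UnitAddCircle) ∈ cyl α x n
      ↔ ∀ k < n, (⌊y + k * α + α⌋ = ⌊y + k * α⌋ + 1 ↔ ⌊t0 + k * α + α⌋ = ⌊t0 + k * α⌋ + 1) := by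
    intro y
    unfold cyl
    rw [mem_setOf_eq]
    constructor
    · intro hy k hk
      rw [← hiter y k, ← hiter t0 k, hx]
      exact hy k hk
    · intro hy k hk
      rw [hiter y k, ← hx, hiter t0 k]
      exact hy k hk
  rw [hcond t]
  have hstep : ∀ (u : ℝ) (k : ℕ), u + (k + 1 : ℕ) * α = u + k * α + α := by
    intro u k; push_cast; ring
  constructor
  · intro H k hk
    induction k with
    | zero =>
      simp only [Nat.cast_zero, zero_mul, add_zero]
      rw [Int.floor_eq_zero_iff.2 ht, Int.floor_eq_zero_iff.2 ht0]
    | succ k ih =>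
      have hk' : k < n := lt_of_lt_of_le (Nat.lt_succ_self k) hk
      have ihh := ih (le_of_lt hk')
      have hiff := H k hk'
      have d1 := floor_dichotomy hα (t + k * α)
      have d2 := floor_dichotomy hα (t0 + k * α)
      rw [hstep t k, hstep t0 k]
      rw [ihh] at hiff d1
      omega
  · intro H k hk
    have h1 := H k (le_of_lt hk)
    have h2 := H (k + 1) hk
    rw [hstep t k, hstep t0 k] at h2
    rw [h1, h2]

theorem floor_slab (c : ℝ) (m : ℤ) (t : ℝ) :
    ⌊t + c⌋ = m ↔ t ∈ Ico ((m : ℝ) - c) ((m : ℝ) + 1 - c) := by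
  rw [Int.floor_eq_iff, mem_Ico]
  push_cast
  constructor <;> rintro ⟨h1, h2⟩ <;> constructor <;> linarith

theorem interval_struct {α : ℝ} (hα : α ∈ Set.Ioo (0:ℝ) 1) {t0 : ℝ} (ht0 : t0 ∈ Ico (0:ℝ) 1)
    (n : ℕ) : ∃ A B : ℝ, A ≤ t0 ∧ t0 < B ∧
      (∀ t, t ∈ Ico (0:ℝ) 1 → ((∀ k ≤ n, ⌊t + k * α⌋ = ⌊t0 + k * α⌋) ↔ t ∈ Ico A B)) ∧
      (∀ k ≤ n, (⌊t0 + k * α⌋ : ℝ) - k * α ≤ A ∧ B ≤ (⌊t0 + k * α⌋ : ℝ) + 1 - k * α) := by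
  have hfl0 : ⌊t0⌋ = 0 := Int.floor_eq_zero_iff.2 ht0
  induction n with
  | zero =>
    refine ⟨0, 1, ht0.1, ht0.2, ?_, ?_⟩
    · intro t ht
      constructor
      · intro _; exact ht
      · intro _ k hk
        interval_cases k
        simp only [Nat.cast_zero, zero_mul, add_zero]
        rw [Int.floor_eq_zero_iff.2 ht, hfl0]
    · intro k hk
      interval_cases k
      simp [hfl0]
  | succ n ih =>
    obtain ⟨A, B, hA, hB, hiff, hsub⟩ := ih
    set c : ℝ := (⌊t0 + (n + 1 : ℕ) * α⌋ : ℝ) - (n + 1 : ℕ) * α with hc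
    refine ⟨max A c, min B (c + 1), ?_, ?_, ?_, ?_⟩
    · exact max_le hA (by rw [hc]; linarith [Int.floor_le (t0 + (n + 1 : ℕ) * α)])
    · exact lt_min hB (by rw [hc]; linarith [Int.lt_floor_add_one (t0 + (n + 1 : ℕ) * α)])
    · intro t ht
      rw [← Ico_inter_Ico, mem_inter_iff, ← hiff t ht]
      constructor
      · intro H
        refine ⟨fun k hk => H k (le_trans hk (Nat.le_succ n)), ?_⟩
        have := H (n + 1) le_rfl
        rw [floor_slab ((n + 1 : ℕ) * α) _ t] at this
        rw [show c + 1 = (⌊t0 + (n + 1 : ℕ) * α⌋ : ℝ) + 1 - (n + 1 : ℕ) * α by rw [hc]; ring]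
        exact this
      · rintro ⟨H1, H2⟩ k hk
        rcases eq_or_lt_of_le hk with hk' | hk'
        · subst hk'
          rw [floor_slab ((n + 1 : ℕ) * α) _ t]
          rw [show c + 1 = (⌊t0 + (n + 1 : ℕ) * α⌋ : ℝ) + 1 - (n + 1 : ℕ) * α by rw [hc]; ring] at H2
          exact H2
        · exact H1 k (Nat.lt_succ_iff.1 hk')
    · intro k hk
      rcases eq_or_lt_of_le hk with hk' | hk'
      · subst hk'
        constructor
        · rw [hc]; exact le_max_right A c
        · have := min_le_right B (c + 1); rw [hc] at this; linarith
      · obtain ⟨h1, h2⟩ := hsub k (Nat.lt_succ_iff.1 hk')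
        exact ⟨le_trans h1 (le_max_left A c), le_trans (min_le_left B (c + 1)) h2⟩

theorem cyl_struct {α : ℝ} (hα : α ∈ Set.Ioo (0:ℝ) 1) (x : UnitAddCircle) (n : ℕ) :
    ∃ A B : ℝ, 0 < B - A ∧ B - A ≤ 1 ∧
      cyl α x n = (fun t : ℝ => (t : UnitAddCircle)) '' Ico A B ∧
      (∀ k ≤ n, ∀ m : ℤ, ((m : ℝ) - k * α) ∉ Ioo A B) := by
  obtain ⟨t0, ht0, hx⟩ := ucoe_surj x
  obtain ⟨A, B, hA, hB, hiff, hsub⟩ := interval_struct hα ht0 n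
  have hfl0 : ⌊t0⌋ = 0 := Int.floor_eq_zero_iff.2 ht0
  have hsub0 := hsub 0 (Nat.zero_le n)
  simp only [Nat.cast_zero, zero_mul, add_zero, sub_zero, hfl0, Int.cast_zero] at hsub0
  have hA0 : 0 ≤ A := hsub0.1
  have hB1 : B ≤ 1 := by have := hsub0.2; linarith
  have hIco : Ico A B ⊆ Ico (0:ℝ) 1 := fun t ht => ⟨le_trans hA0 ht.1, lt_of_lt_of_le ht.2 hB1⟩
  refine ⟨A, B, by linarith, by linarith, ?_, ?_⟩
  · ext y
    constructor
    · intro hy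
      obtain ⟨t, ht, hty⟩ := ucoe_surj y
      rw [← hty] at hy
      rw [mem_cyl_iff hα ht0 ht hx n] at hy
      exact ⟨t, (hiff t ht).1 hy, hty⟩
    · rintro ⟨t, ht, rfl⟩
      rw [mem_cyl_iff hα ht0 (hIco ht) hx n]
      exact (hiff t (hIco ht)).2 ht
  · intro k hk m hmem
    obtain ⟨h1, h2⟩ := hsub k hk
    obtain ⟨hm1, hm2⟩ := hmem
    have e1 : (⌊t0 + k * α⌋ : ℝ) < (m : ℝ) := by linarith
    have e2 : (m : ℝ) < (⌊t0 + k * α⌋ : ℝ) + 1 := by linarith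
    have e1' : ⌊t0 + k * α⌋ < m := by exact_mod_cast e1
    have e2' : (m : ℝ) < ((⌊t0 + k * α⌋ + 1 : ℤ) : ℝ) := by push_cast; linarith
    have e2'' : m < ⌊t0 + k * α⌋ + 1 := by exact_mod_cast e2'
    omega

theorem ret_set_iff {α : ℝ} {A B : ℝ} (hAB : 0 < B - A) (k : ℕ) :
    ((rotF α)^[k] '' ((fun t : ℝ => (t : UnitAddCircle)) '' Ico A B) ∩
      ((fun t : ℝ => (t : UnitAddCircle)) '' Ico A B)).Nonempty
      ↔ ∃ m : ℤ, |(k : ℝ) * α - m| < B - A := by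
  constructor
  · rintro ⟨z, ⟨w, ⟨s, hs, rfl⟩, rfl⟩, ⟨u, hu, huz⟩⟩
    rw [rotF_iterate] at huz
    obtain ⟨m, hm⟩ := (ucoe_eq_coe u (s + k * α)).1 huz
    refine ⟨-m, ?_⟩
    have heq : (k : ℝ) * α - ((-m : ℤ) : ℝ) = u - s := by push_cast; linarith
    rw [heq, abs_sub_lt_iff]
    obtain ⟨hs1, hs2⟩ := hs; obtain ⟨hu1, hu2⟩ := hu
    constructor <;> linarith
  · rintro ⟨m, hm⟩
    set d : ℝ := (k : ℝ) * α - m with hd_def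
    rcases le_or_gt 0 d with hd | hd
    · have habs : d < B - A := by rw [abs_of_nonneg hd] at hm; exact hm
      have hFA : (rotF α)^[k] ((A : ℝ) : UnitAddCircle) = ((A + d : ℝ) : UnitAddCircle) := by
        rw [rotF_iterate, ucoe_eq_coe]
        exact ⟨m, by rw [hd_def]; push_cast; ring⟩
      exact ⟨((A + d : ℝ) : UnitAddCircle),
        ⟨((A : ℝ) : UnitAddCircle), ⟨A, ⟨le_refl A, by linarith⟩, rfl⟩, hFA⟩,
        ⟨A + d, ⟨by linarith, by linarith⟩, rfl⟩⟩
    · have habs : -d < B - A := by rw [abs_of_neg hd] at hm; exact hm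
      have hFA : (rotF α)^[k] ((A - d : ℝ) : UnitAddCircle) = ((A : ℝ) : UnitAddCircle) := by
        rw [rotF_iterate, ucoe_eq_coe]
        exact ⟨m, by rw [hd_def]; push_cast; ring⟩
      exact ⟨((A : ℝ) : UnitAddCircle),
        ⟨((A - d : ℝ) : UnitAddCircle), ⟨A - d, ⟨by linarith, by linarith⟩, rfl⟩, hFA⟩,
        ⟨A, ⟨le_refl A, by linarith⟩, rfl⟩⟩



theorem lemD (A B e : ℝ) (h0 : 0 < e) (hlt : e < B - A) :
    ∃ (c : ℕ) (m : ℤ), (c : ℝ) * e < 1 + e ∧ (m : ℝ) + c * e ∈ Ioo A B := by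
  have hfr0 : 0 ≤ Int.fract A := Int.fract_nonneg A
  have hfr1 : Int.fract A < 1 := Int.fract_lt_one A
  have hex : ∃ c : ℕ, Int.fract A < c * e := by
    obtain ⟨c, hc⟩ := exists_nat_gt (Int.fract A / e)
    exact ⟨c, by rwa [div_lt_iff₀ h0] at hc⟩
  classical
  set c := Nat.find hex with hc_def
  have hc : Int.fract A < c * e := Nat.find_spec hex
  have hc0 : c ≠ 0 := by
    intro h0'
    rw [h0'] at hc; push_cast at hc; linarith
  have hprev : ¬ (Int.fract A < (↑(c - 1) : ℕ) * e) := Nat.find_min hex (by omega)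
  push_neg at hprev
  have hcast : ((c - 1 : ℕ) : ℝ) = (c : ℝ) - 1 := by
    rw [Nat.cast_sub (by omega : 1 ≤ c), Nat.cast_one]
  rw [hcast] at hprev
  have hfr : Int.fract A = A - ⌊A⌋ := by rw [Int.fract]
  refine ⟨c, ⌊A⌋, by nlinarith, ⟨by linarith [hc, hfr], ?_⟩⟩
  have : (c : ℝ) * e ≤ Int.fract A + e := by nlinarith
  have hup : (⌊A⌋ : ℝ) + c * e ≤ A + e := by linarith [hfr]
  linarith

theorem lemDneg (A B e : ℝ) (h0 : 0 < e) (hlt : e < B - A) :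
    ∃ (c : ℕ) (m : ℤ), (c : ℝ) * e < 1 + e ∧ (m : ℝ) - c * e ∈ Ioo A B := by
  obtain ⟨c, m, hc, hmem⟩ := lemD (-B) (-A) e h0 (by linarith)
  obtain ⟨h1, h2⟩ := hmem
  exact ⟨c, -m, hc, ⟨by push_cast; linarith, by push_cast; linarith⟩⟩

theorem limsup_helper {f g : ℕ → ℝ≥0∞}
    (hb : ∀ b : ℝ≥0∞, (∀ᶠ n in atTop, f n ≤ b) → (∀ᶠ k in atTop, g k ≤ b)) :
    limsup g atTop ≤ limsup f atTop := by
  rw [limsup_eq, limsup_eq]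
  exact sInf_le_sInf (fun b hbf => hb b hbf)

section Final

variable {α : ℝ} {a p q : ℕ → ℕ} (h : CF α a p q)
include h


theorem retTime_val (x : UnitAddCircle) (n : ℕ) :
    ∃ (j : ℕ) (A B : ℝ), retTime α (cyl α x n) = q (j + 1) ∧
      Efn α p q (j + 1) < B - A ∧ 0 < B - A ∧
      (∀ k ≤ n, ∀ m : ℤ, ((m : ℝ) - k * α) ∉ Ioo A B) ∧
      {c : ℕ | 1 ≤ c ∧ ((rotF α)^[c] '' (cyl α x n) ∩ cyl α x n).Nonempty}.Nonempty := by
  obtain ⟨A, B, h0, h1, hcyleq, havoid⟩ := cyl_struct h.hα x n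
  have hex : ∃ j, Efn α p q (j + 1) < B - A := by
    obtain ⟨k, hk⟩ := h.Esmall h0
    exact ⟨k, lt_of_lt_of_le (h.Edec k) (le_of_lt hk)⟩
  classical
  set j := Nat.find hex with hj_def
  have hj : Efn α p q (j + 1) < B - A := Nat.find_spec hex
  have hj2 : B - A ≤ Efn α p q j := by
    rcases Nat.eq_zero_or_pos j with hj0 | hj0
    · rw [hj0, h.E0]; exact h1
    · obtain ⟨i, hi⟩ : ∃ i, j = i + 1 := ⟨j - 1, by omega⟩
      rw [hi]
      exact not_lt.1 (Nat.find_min hex (by omega))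
  have hmem : q (j + 1) ∈ {c : ℕ | 1 ≤ c ∧ ((rotF α)^[c] '' (cyl α x n) ∩ cyl α x n).Nonempty} := by
    refine ⟨h.qpos j, ?_⟩
    rw [hcyleq, ret_set_iff h0]
    exact ⟨(p (j + 1) : ℤ), by push_cast; rw [h.Eabs (j + 1)]; exact hj⟩
  have hlow : ∀ c ∈ {c : ℕ | 1 ≤ c ∧ ((rotF α)^[c] '' (cyl α x n) ∩ cyl α x n).Nonempty},
      q (j + 1) ≤ c := by
    intro c hc
    rcases Nat.eq_zero_or_pos j with hj0 | hj0
    · rw [hj0, h.hq1]; exact hc.1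
    · obtain ⟨i, hi⟩ : ∃ i, j = i + 1 := ⟨j - 1, by omega⟩
      by_contra hlt
      push_neg at hlt
      obtain ⟨hc1, hcne⟩ := hc
      rw [hcyleq, ret_set_iff h0] at hcne
      obtain ⟨m, hm⟩ := hcne
      rw [hi] at hlt
      have hba := h.bestApprox i c m hc1 hlt
      rw [hi] at hj2
      linarith
  have hval : retTime α (cyl α x n) = q (j + 1) := by
    apply le_antisymm (Nat.sInf_le hmem)
    exact hlow _ (Nat.sInf_mem ⟨_, hmem⟩)
  exact ⟨j, A, B, hval, hj, h0, havoid, ⟨_, hmem⟩⟩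

theorem shrink (i : ℕ) : ∃ N : ℕ, ∀ A B : ℝ,
    (∀ k ≤ N, ∀ m : ℤ, ((m : ℝ) - k * α) ∉ Ioo A B) → B - A ≤ Efn α p q (i + 1) := by
  have he : 0 < Efn α p q (i + 1) := h.Epos _
  refine ⟨Nat.ceil ((1 + Efn α p q (i + 1)) / Efn α p q (i + 1)) * q (i + 1), ?_⟩
  intro A B havoid
  by_contra hBA
  push_neg at hBA
  have h1R : ((-1 : ℝ) ^ i) * ((-1 : ℝ) ^ i) = 1 := by
    rw [← pow_add]; exact Even.neg_one_pow ⟨i, rfl⟩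
  have hqa : (q (i + 1) : ℝ) * α - (p (i + 1) : ℝ) = (-1 : ℝ) ^ i * Efn α p q (i + 1) := by
    rw [Efn, show i + 1 + 1 = i + 2 from rfl, pow_add]
    linear_combination (-((q (i + 1) : ℝ) * α) + (p (i + 1) : ℝ)) * h1R
  have hcC : ∀ c : ℕ, (c : ℝ) * Efn α p q (i + 1) < 1 + Efn α p q (i + 1) →
      c * q (i + 1) ≤ Nat.ceil ((1 + Efn α p q (i + 1)) / Efn α p q (i + 1)) * q (i + 1) := by
    intro c hc
    apply Nat.mul_le_mul_right
    have hle : (c : ℝ) ≤ ((1 + Efn α p q (i + 1)) / Efn α p q (i + 1)) := by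
      rw [le_div_iff₀ he]; linarith
    have := le_trans hle (Nat.le_ceil _)
    exact_mod_cast this
  rcases Nat.even_or_odd i with hpar | hpar
  · have hsgn : (-1 : ℝ) ^ i = 1 := hpar.neg_one_pow
    rw [hsgn, one_mul] at hqa
    obtain ⟨c, m, hc, hmem⟩ := lemDneg A B (Efn α p q (i + 1)) he hBA
    refine havoid (c * q (i + 1)) (hcC c hc) (m + c * (p (i + 1) : ℤ)) ?_
    have heql : ((m + c * (p (i + 1) : ℤ) : ℤ) : ℝ) - ((c * q (i + 1) : ℕ) : ℝ) * α
        = (m : ℝ) - c * Efn α p q (i + 1) := by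
      push_cast
      linear_combination (-(c : ℝ)) * hqa
    rw [heql]
    exact hmem
  · have hsgn : (-1 : ℝ) ^ i = -1 := hpar.neg_one_pow
    rw [hsgn] at hqa
    obtain ⟨c, m, hc, hmem⟩ := lemD A B (Efn α p q (i + 1)) he hBA
    refine havoid (c * q (i + 1)) (hcC c hc) (m + c * (p (i + 1) : ℤ)) ?_
    have heql : ((m + c * (p (i + 1) : ℤ) : ℤ) : ℝ) - ((c * q (i + 1) : ℕ) : ℝ) * α
        = (m : ℝ) + c * Efn α p q (i + 1) := by
      push_cast
      linear_combination (-(c : ℝ)) * hqa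
    rw [heql]
    exact hmem

theorem TT_mono (x : UnitAddCircle) : Monotone (fun n => retTime α (cyl α x n)) := by
  apply monotone_nat_of_le_succ
  intro n
  obtain ⟨j, A, B, hval, hjlt, h0, havoid, hne⟩ := retTime_val h x (n + 1)
  have hsub : cyl α x (n + 1) ⊆ cyl α x n := fun y hy k hk => hy k (by omega)
  have hsubS : {c : ℕ | 1 ≤ c ∧ ((rotF α)^[c] '' (cyl α x (n + 1)) ∩ cyl α x (n + 1)).Nonempty}
      ⊆ {c : ℕ | 1 ≤ c ∧ ((rotF α)^[c] '' (cyl α x n) ∩ cyl α x n).Nonempty} := by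
    rintro c ⟨hc1, z, hz1, hz2⟩
    exact ⟨hc1, z, image_mono hsub hz1, hsub hz2⟩
  exact Nat.sInf_le (hsubS (Nat.sInf_mem hne))

theorem TT_tendsto (x : UnitAddCircle) :
    Tendsto (fun n => retTime α (cyl α x n)) atTop atTop := by
  rw [tendsto_atTop_atTop]
  intro b
  obtain ⟨N, hN⟩ := shrink h b
  refine ⟨N, fun n hn => ?_⟩
  obtain ⟨j, A, B, hval, hjlt, h0, havoid, _⟩ := retTime_val h x n
  have hBA : B - A ≤ Efn α p q (b + 1) := hN A B (fun k hk m => havoid k (le_trans hk hn) m)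
  have hEE : Efn α p q (j + 1) < Efn α p q (b + 1) := lt_of_lt_of_le hjlt hBA
  have hjb : b + 1 < j + 1 := h.EstrictAnti.lt_iff_gt.1 hEE
  have : q (b + 2) ≤ q (j + 1) := h.qmono (by omega)
  have := h.qlarge b
  omega


theorem rjump_spec (x : UnitAddCircle) (k : ℕ) :
    q (k + 2) ≤ retTime α (cyl α x (rjump α q x (k + 1))) ∧
    ∀ n, q (k + 2) ≤ retTime α (cyl α x n) → rjump α q x (k + 1) ≤ n := by
  have hne : {n : ℕ | q (k + 1 + 1) ≤ retTime α (cyl α x n)}.Nonempty := by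
    obtain ⟨N, hN⟩ := (tendsto_atTop_atTop.1 (TT_tendsto h x)) (q (k + 1 + 1))
    exact ⟨N, hN N le_rfl⟩
  constructor
  · exact (Nat.sInf_mem hne : _)
  · intro n hn
    exact Nat.sInf_le hn

theorem rjump_tendsto (x : UnitAddCircle) :
    Tendsto (fun k => rjump α q x (k + 1)) atTop atTop := by
  rw [tendsto_atTop_atTop]
  intro N
  refine ⟨retTime α (cyl α x N), fun k hk => ?_⟩
  by_contra hlt
  push_neg at hlt
  have h1 : retTime α (cyl α x (rjump α q x (k + 1))) ≤ retTime α (cyl α x N) :=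
    TT_mono h x (le_of_lt hlt)
  have h2 := (rjump_spec h x k).1
  have h3 := h.qlarge k
  omega

theorem goal1 (x : UnitAddCircle) :
    Rup α x = limsup (fun k : ℕ => (q (k + 2) : ℝ≥0∞) / (rjump α q x (k + 1) : ℝ≥0∞)) atTop := by
  apply le_antisymm
  · -- limsup f ≤ limsup g
    apply limsup_helper
    intro b hbg
    obtain ⟨K, hK⟩ := eventually_atTop.1 hbg
    rw [eventually_atTop]
    obtain ⟨N, hN⟩ := (tendsto_atTop_atTop.1 (TT_tendsto h x)) (max (q 3) (q (K + 3)))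
    refine ⟨N, fun n hn => ?_⟩
    have hTT := hN n hn
    have hTT3 : q 3 ≤ retTime α (cyl α x n) := le_trans (le_max_left _ _) hTT
    have hTTK : q (K + 3) ≤ retTime α (cyl α x n) := le_trans (le_max_right _ _) hTT
    have hq3 : 2 ≤ q 3 := h.qlarge 1
    obtain ⟨j, A, B, hval, -, -, -, -⟩ := retTime_val h x n
    have hj1 : 1 ≤ j := by
      by_contra hj0
      push_neg at hj0
      interval_cases j
      rw [h.hq1] at hval
      omega
    set T := retTime α (cyl α x n) with hT_def
    set k := Nat.findGreatest (fun k => q (k + 2) ≤ T) T with hk_def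
    have hT1 : 1 ≤ T := by omega
    have hPk : q (k + 2) ≤ T := by
      rw [hk_def]
      exact Nat.findGreatest_spec (P := fun k => q (k + 2) ≤ T) (m := 1) hT1 hTT3
    have hqj : j ≤ q (j + 1) := by
      have := h.qlarge (j - 1)
      rw [show j - 1 + 2 = j + 1 by omega] at this
      omega
    have hjk : j - 1 ≤ k := by
      by_contra hgt
      push_neg at hgt
      have hjT : j ≤ T := by omega
      have hng : ¬ q (j - 1 + 2) ≤ T :=
        Nat.findGreatest_is_greatest (P := fun k => q (k + 2) ≤ T) hgt (by omega)
      rw [show j - 1 + 2 = j + 1 by omega] at hng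
      omega
    have hqkT : q (k + 2) = T := by
      have hle : q (j + 1) ≤ q (k + 2) := h.qmono (by omega)
      omega
    have hkK : K ≤ k := by
      by_contra hlt
      push_neg at hlt
      have h1 : q (k + 2) ≤ q (K + 2) := h.qmono (by omega)
      have h2 : q (K + 2) < q (K + 3) := h.qstrict K
      omega
    have hun : rjump α q x (k + 1) ≤ n := (rjump_spec h x k).2 n hPk
    have step1 : (T : ℝ≥0∞) / (n : ℝ≥0∞)
        ≤ (q (k + 2) : ℝ≥0∞) / (rjump α q x (k + 1) : ℝ≥0∞) := by
      rw [← hqkT]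
      exact ENNReal.div_le_div (le_refl _) (by exact_mod_cast hun)
    exact le_trans step1 (hK k hkK)
  · -- limsup g ≤ limsup f
    apply limsup_helper
    intro b hbf
    obtain ⟨N, hN⟩ := eventually_atTop.1 hbf
    rw [eventually_atTop]
    obtain ⟨K, hK⟩ := (tendsto_atTop_atTop.1 (rjump_tendsto h x)) N
    refine ⟨K, fun k hk => ?_⟩
    have hu : N ≤ rjump α q x (k + 1) := hK k hk
    have h1 : (q (k + 2) : ℝ≥0∞) / (rjump α q x (k + 1) : ℝ≥0∞)
        ≤ (retTime α (cyl α x (rjump α q x (k + 1))) : ℝ≥0∞) / (rjump α q x (k + 1) : ℝ≥0∞) :=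
      ENNReal.div_le_div (by exact_mod_cast (rjump_spec h x k).1) (le_refl _)
    exact le_trans h1 (hN _ hu)

theorem goal2 (x : UnitAddCircle) :
    Rup α x =
      (liminf (fun k : ℕ => (rjump α q x (k + 1) : ℝ≥0∞) / (q (k + 2) : ℝ≥0∞)) atTop)⁻¹ := by
  rw [goal1 h x, ENNReal.inv_liminf]
  congr 1
  funext k
  rw [ENNReal.inv_div (Or.inl (ENNReal.natCast_ne_top _))
    (Or.inl (by exact_mod_cast Nat.one_le_iff_ne_zero.1 (h.qpos (k + 1))))]


end Final

/-- For every `x ∈ 𝕋`,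
`R_up(x) = limsup_{k→∞} q_{k+1} / r_k(x) = 1 / liminf_{k→∞} r_k(x) / q_{k+1}`
(as extended reals).  With our indexing, the paper's `q_{k+1}` is `q (k+2)` and
the paper's `r_k(x)` is `rjump α q x (k+1)`. -/
theorem statement1
    (α : ℝ) (hα : α ∈ Set.Ioo (0 : ℝ) 1) (hirr : Irrational α)
    (a p q : ℕ → ℕ) (ha : ∀ k, 1 ≤ a k)
    -- `a k`, `p (k+1)`, `q (k+1)` are the paper's `a_{k+1}`, `p_k`, `q_k`;
    -- `p 0`, `q 0` are the paper's `p_{-1} = 1`, `q_{-1} = 0`.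
    (hq0 : q 0 = 0) (hq1 : q 1 = 1) (hq : ∀ k, q (k + 2) = a k * q (k + 1) + q k)
    (hp0 : p 0 = 1) (hp1 : p 1 = 0) (hp : ∀ k, p (k + 2) = a k * p (k + 1) + p k)
    -- `a` is the continued fraction expansion of `α`:
    -- the paper's `η_k = (-1)^k (q_k α - p_k)` is positive for all `k ≥ -1`.
    (hcf : ∀ k, 0 < (-1 : ℝ) ^ (k + 1) * ((q k : ℝ) * α - (p k : ℝ)))
    (x : UnitAddCircle) :
    Rup α x =
      limsup (fun k : ℕ => (q (k + 2) : ℝ≥0∞) / (rjump α q x (k + 1) : ℝ≥0∞)) atTop ∧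
    Rup α x =
      (liminf (fun k : ℕ => (rjump α q x (k + 1) : ℝ≥0∞) / (q (k + 2) : ℝ≥0∞)) atTop)⁻¹ := by
  have h : CF α a p q := ⟨hα, ha, hq0, hq1, hq, hp0, hp1, hp, hcf⟩
  exact ⟨goal1 h x, goal2 h x⟩
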